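/- Let p be an odd prime and n, k positive integers such that n/gcd(n,k) is odd and p^n ≡ 3 (mod 4), and set d = (p^n−1)/2 + p^k + 1. Then the power function f(x)=x^d on F_{p^n} satisfies _1Δ_f ≤ 6: for every a ∈ F_{p^n} with a ≠ 0 and every b ∈ F_{p^n}, the equation (x+a)^d − x^d = b has at most 6 solutions x ∈ F_{p^n}. -/

import Mathlib

private lemma aux_dvd_two (p n k r : ℕ) (hnodd : Odd n) (hn1 : 1 ≤ p ^ n)
    (h1 : r ∣ p ^ k + 1) (h2 : r ∣ p ^ n - 1) : r ∣ 2 := by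
  have hπk : (p : ZMod r) ^ k = -1 := by
    have h : ((p ^ k + 1 : ℕ) : ZMod r) = 0 := (ZMod.natCast_eq_zero_iff _ _).2 h1
    push_cast at h
    linear_combination h
  have hπn : (p : ZMod r) ^ n = 1 := by
    have h : ((p ^ n - 1 : ℕ) : ZMod r) = 0 := (ZMod.natCast_eq_zero_iff _ _).2 h2
    rw [Nat.cast_sub hn1] at h
    push_cast at h
    linear_combination h
  have h2k : (p : ZMod r) ^ (k * 2) = 1 := by
    rw [pow_mul, hπk]; ring
  have hg : (p : ZMod r) ^ (Nat.gcd (k * 2) n) = 1 := pow_gcd_eq_one.2 ⟨h2k, hπn⟩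
  have hgk : Nat.gcd (k * 2) n ∣ k := by
    have hdl : Nat.gcd (k * 2) n ∣ k * 2 := Nat.gcd_dvd_left _ _
    have hdr : Nat.gcd (k * 2) n ∣ n := Nat.gcd_dvd_right _ _
    have hgodd : Odd (Nat.gcd (k * 2) n) := hnodd.of_dvd_nat hdr
    have hcop : Nat.Coprime (Nat.gcd (k * 2) n) 2 := by
      rw [Nat.coprime_two_right]; exact hgodd
    exact hcop.dvd_of_dvd_mul_right hdl
  have hπkk : (p : ZMod r) ^ k = 1 := by
    obtain ⟨c, hc⟩ := hgk
    rw [hc, pow_mul, hg, one_pow]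
  have h20 : ((2 : ℕ) : ZMod r) = 0 := by
    push_cast
    rw [hπkk] at hπk
    linear_combination hπk
  exact (ZMod.natCast_eq_zero_iff 2 r).1 h20

/-- Theorem 3.6 (Theorem `thme`), case `p^n ≡ 3 (mod 4)`, `c = 1`: for
`d = (p^n-1)/2 + p^k + 1` with `n/gcd(n,k)` odd, one has `₁Δ_f ≤ 6`. -/
theorem stmt_14 (p n k : ℕ) (hp : p.Prime) (hodd : Odd p)
    (hn0 : 0 < n) (hk0 : 0 < k) (hquot : Odd (n / Nat.gcd n k))
    (hmod : p ^ n % 4 = 3) (d : ℕ) (hd : d = (p ^ n - 1) / 2 + p ^ k + 1)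
    (F : Type*) [Field F] [Fintype F] (hcard : Fintype.card F = p ^ n)
    (a b : F) (ha : a ≠ 0) :
    {x : F | (x + a) ^ d - x ^ d = b}.ncard ≤ 6 := by
  have hn1 : 1 ≤ p ^ n := Nat.one_le_pow _ _ hp.pos
  have hpk1 : 1 ≤ p ^ k := Nat.one_le_pow _ _ hp.pos
  have hpkodd : Odd (p ^ k) := hodd.pow
  have hpk2 : 1 < p ^ k := Nat.one_lt_pow hk0.ne' hp.one_lt
  have hpkodd' : p ^ k % 2 = 1 := Nat.odd_iff.1 hpkodd
  -- n is odd
  have hnodd : Odd n := by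
    rcases Nat.even_or_odd n with he | ho
    · exfalso
      obtain ⟨j, hj⟩ := he
      obtain ⟨c, hc⟩ := (hodd.pow : Odd (p ^ j))
      have hsq : p ^ n = (p ^ j) * (p ^ j) := by rw [hj, ← pow_add]
      have h4 : p ^ n = 4 * (c * c + c) + 1 := by rw [hsq, hc]; ring
      omega
    · exact ho
  -- the characteristic is p
  haveI : CharP F (ringChar F) := ringChar.charP F
  obtain ⟨m, hrp, hcard'⟩ := FiniteField.card F (ringChar F)
  have hpr : p = ringChar F := by
    have h1 : p ∣ (ringChar F) ^ (m : ℕ) := by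
      rw [← hcard', hcard]
      exact dvd_pow_self p hn0.ne'
    exact (Nat.prime_dvd_prime_iff_eq hp hrp).1 (hp.dvd_of_dvd_pow h1)
  haveI : Fact p.Prime := ⟨hp⟩
  haveI hchar : CharP F p := hpr ▸ ringChar.charP F
  -- 2 ≠ 0 in F
  have h2F : (2 : F) ≠ 0 := by
    intro h
    have h2 : (p : ℕ) ∣ 2 := (CharP.cast_eq_zero_iff F p 2).1 (by exact_mod_cast h)
    have hp2 : p = 2 := (Nat.prime_dvd_prime_iff_eq hp Nat.prime_two).1 h2
    rw [hp2] at hodd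
    exact (Nat.not_odd_iff_even.2 (by norm_num)) hodd
  have hm1 : (-1 : F) ≠ 1 := by
    intro h
    apply h2F
    linear_combination -h
  -- frobenius
  have hfrob : ∀ x y : F, (x + y) ^ p ^ k = x ^ p ^ k + y ^ p ^ k := fun x y =>
    add_pow_char_pow x y p k
  have hfrob2 : (2 : F) ^ p ^ k = 2 := by
    have h11 := hfrob 1 1
    rw [one_pow] at h11
    norm_num at h11
    exact h11
  -- t and parity facts
  set t := (p ^ n - 1) / 2 with ht
  have h2t : p ^ n - 1 = 2 * t := by omega
  have htodd : Odd t := by rw [Nat.odd_iff]; omega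
  have hdodd : Odd d := by rw [Nat.odd_iff]; rw [Nat.odd_iff] at htodd; omega
  have hdne : d ≠ 0 := by omega
  have hq1 : ∀ z : F, z ≠ 0 → z ^ (p ^ n - 1) = 1 := by
    intro z hz
    have := FiniteField.pow_card_sub_one_eq_one z hz
    rwa [hcard] at this
  have hsign : ∀ z : F, z ≠ 0 → z ^ t = 1 ∨ z ^ t = -1 := by
    intro z hz
    have hsq : (z ^ t) * (z ^ t) = 1 := by
      rw [← pow_add, show t + t = p ^ n - 1 by omega]
      exact hq1 z hz
    exact mul_self_eq_one_iff.1 hsq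
  -- roots of unity of order p^k + 1 are ±1
  have RU : ∀ ζ : F, ζ ^ (p ^ k + 1) = 1 → ζ = 1 ∨ ζ = -1 := by
    intro ζ hζ
    have hζ0 : ζ ≠ 0 := by
      intro h
      rw [h, zero_pow (by omega)] at hζ
      exact zero_ne_one hζ
    have hζn : ζ ^ (p ^ n - 1) = 1 := hq1 ζ hζ0
    have hg : ζ ^ (Nat.gcd (p ^ k + 1) (p ^ n - 1)) = 1 := pow_gcd_eq_one.2 ⟨hζ, hζn⟩
    have hdvd : Nat.gcd (p ^ k + 1) (p ^ n - 1) ∣ 2 :=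
      aux_dvd_two p n k _ hnodd hn1 (Nat.gcd_dvd_left _ _) (Nat.gcd_dvd_right _ _)
    have hsq : ζ * ζ = 1 := by
      obtain ⟨c, hc⟩ := hdvd
      have h2' : ζ ^ (2 : ℕ) = 1 := by rw [hc, pow_mul, hg, one_pow]
      rw [pow_two] at h2'
      exact h2'
    exact mul_self_eq_one_iff.1 hsq
  -- no element has (p^k - 1)-st power equal to -1
  have NEG : ∀ u : F, u ^ (p ^ k - 1) ≠ -1 := by
    intro u hu
    have hu0 : u ≠ 0 := by
      intro h
      rw [h, zero_pow (by omega)] at hu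
      exact one_ne_zero (show (1:F) = 0 by linear_combination hu)
    obtain ⟨c, hc⟩ := hpkodd
    have hexp : (p ^ k - 1) * t = (p ^ n - 1) * c := by
      rw [h2t, show p ^ k - 1 = 2 * c by omega]
      ring
    have h1 : (u ^ (p ^ k - 1)) ^ t = 1 := by
      rw [← pow_mul, hexp, pow_mul, hq1 u hu0, one_pow]
    rw [hu, htodd.neg_one_pow] at h1
    exact hm1 h1
  -- injectivity of the linearized map x ↦ a x^{p^k} + a^{p^k} x
  have hLinj : ∀ x y : F, a * x ^ p ^ k + a ^ p ^ k * x = a * y ^ p ^ k + a ^ p ^ k * y → x = y := by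
    intro x y h
    by_contra hne
    have hz : x - y ≠ 0 := sub_ne_zero.2 hne
    have hP1 : (x - y) ^ p ^ k = x ^ p ^ k - y ^ p ^ k := by
      have h' := hfrob y (x - y)
      rw [show y + (x - y) = x from by ring] at h'
      linear_combination -h'
    have hstep : a * (x - y) ^ p ^ k + a ^ p ^ k * (x - y) = 0 := by
      linear_combination a * hP1 + h
    have hw0 : (x - y) * a⁻¹ ≠ 0 := mul_ne_zero hz (inv_ne_zero ha)
    have haP : a ^ p ^ k ≠ 0 := pow_ne_zero _ ha
    have hwP : ((x - y) * a⁻¹) ^ p ^ k = -((x - y) * a⁻¹) := by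
      rw [mul_pow, inv_pow]
      field_simp
      linear_combination hstep
    have hw1 : ((x - y) * a⁻¹) ^ (p ^ k - 1) * ((x - y) * a⁻¹) = -1 * ((x - y) * a⁻¹) := by
      rw [← pow_succ, show p ^ k - 1 + 1 = p ^ k by omega, hwP]
      ring
    exact NEG _ (mul_right_cancel₀ hw0 hw1)
  -- subsingleton counting helper
  have hsub1 : ∀ T : Set F, (∀ x ∈ T, ∀ y ∈ T, x = y) → T.ncard ≤ 1 := by
    intro T hT
    rcases T.eq_empty_or_nonempty with rfl | ⟨x0, hx0⟩
    · simp
    · have hs : T ⊆ {x0} := fun y hy => by simp [hT y hy x0 hx0]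
      exact (Set.ncard_le_ncard hs (Set.toFinite _)).trans (by simp)
  -- counting for (x+s)^e = c
  have hCNT : ∀ s c : F, {x : F | (x + s) ^ (p ^ k + 1) = c}.ncard ≤ 2 := by
    intro s c
    rcases eq_or_ne c 0 with rfl | hc
    · refine le_trans (hsub1 _ ?_) one_le_two
      intro x hx y hy
      simp only [Set.mem_setOf_eq] at hx hy
      have hx' : x + s = 0 := pow_eq_zero_iff (by omega : p ^ k + 1 ≠ 0) |>.1 hx
      have hy' : y + s = 0 := pow_eq_zero_iff (by omega : p ^ k + 1 ≠ 0) |>.1 hy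
      linear_combination hx' - hy'
    · rcases Set.eq_empty_or_nonempty {x : F | (x + s) ^ (p ^ k + 1) = c} with hT | ⟨x0, hx0⟩
      · rw [hT]; simp
      · simp only [Set.mem_setOf_eq] at hx0
        have hx0ne : x0 + s ≠ 0 := by
          intro h
          rw [h, zero_pow (by omega)] at hx0
          exact hc hx0.symm
        have hsub : {x : F | (x + s) ^ (p ^ k + 1) = c} ⊆ {x0, -x0 - 2 * s} := by
          intro x hx
          simp only [Set.mem_setOf_eq] at hx
          have hr : ((x + s) * (x0 + s)⁻¹) ^ (p ^ k + 1) = 1 := by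
            rw [mul_pow, inv_pow, hx, hx0]
            exact mul_inv_cancel₀ hc
          rcases RU _ hr with h1 | h1
          · left
            have h2 := (mul_inv_eq_one₀ hx0ne).1 h1
            linear_combination h2
          · right
            have h2 : x + s = -1 * (x0 + s) := (mul_inv_eq_iff_eq_mul₀ hx0ne).1 h1
            simp only [Set.mem_singleton_iff]
            linear_combination h2
        refine le_trans (Set.ncard_le_ncard hsub (Set.toFinite _)) ?_
        exact le_trans (Set.ncard_insert_le _ _) (by simp)
  -- algebraic identities
  obtain ⟨a2, ha2eq⟩ : ∃ y : F, a = 2 * y := ⟨a / 2, by field_simp⟩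
  have ha2ne : a2 ≠ 0 := by
    intro h
    apply ha
    rw [ha2eq, h, mul_zero]
  have hPa2 : a ^ p ^ k = 2 * a2 ^ p ^ k := by
    rw [ha2eq, mul_pow, hfrob2]
  have hiden2 : ∀ x : F, (x + a) ^ (p ^ k + 1) - x ^ (p ^ k + 1)
      = a * x ^ p ^ k + a ^ p ^ k * x + a ^ p ^ k * a := by
    intro x
    rw [pow_succ, pow_succ, hfrob x a]
    ring
  have hiden : ∀ x : F, (x + a) ^ (p ^ k + 1) + x ^ (p ^ k + 1)
      = 2 * (x + a2) ^ (p ^ k + 1) + a ^ p ^ k * a2 := by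
    intro x
    rw [pow_succ, pow_succ, pow_succ, hfrob x a, hfrob x a2]
    linear_combination (x + a2) * hPa2 + (x ^ p ^ k + a ^ p ^ k) * ha2eq
  have hae : a ^ (p ^ k + 1) = a ^ p ^ k * a := pow_succ a _
  have hae2 : a2 ^ (p ^ k + 1) = a2 ^ p ^ k * a2 := pow_succ a2 _
  -- bound for the "linear" sets
  have hB1 : ∀ v : F,
      {x : F | x ≠ 0 ∧ (x + a) ^ (p ^ k + 1) - x ^ (p ^ k + 1) = v}.ncard ≤ 1 := by
    intro v
    apply hsub1
    intro x hx y hy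
    simp only [Set.mem_setOf_eq] at hx hy
    apply hLinj
    have h1 := hiden2 x
    have h2 := hiden2 y
    linear_combination hx.2 - hy.2 - h1 + h2
  -- emptiness of the linear set at v = a^(p^k+1)
  have hB0 : {x : F | x ≠ 0 ∧ (x + a) ^ (p ^ k + 1) - x ^ (p ^ k + 1) = a ^ (p ^ k + 1)} = ∅ := by
    ext x
    simp only [Set.mem_setOf_eq, Set.mem_empty_iff_false, iff_false, not_and]
    intro hx0 hxe
    apply hx0
    apply hLinj
    have h1 := hiden2 x
    have hz : (0 : F) ^ p ^ k = 0 := zero_pow (by omega)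
    rw [hz]
    linear_combination hxe - h1 + hae
  -- bound for the "mixed" sets
  have hmix : ∀ x v : F, (x + a) ^ (p ^ k + 1) + x ^ (p ^ k + 1) = v →
      (x + a2) ^ (p ^ k + 1) = (v - a ^ p ^ k * a2) / 2 := by
    intro x v hx
    have h1 := hiden x
    rw [eq_div_iff h2F]
    linear_combination hx - h1
  have hB2 : ∀ v : F, {x : F | (x + a) ^ (p ^ k + 1) + x ^ (p ^ k + 1) = v}.ncard ≤ 2 := by
    intro v
    have hsub : {x : F | (x + a) ^ (p ^ k + 1) + x ^ (p ^ k + 1) = v}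
        ⊆ {x : F | (x + a2) ^ (p ^ k + 1) = (v - a ^ p ^ k * a2) / 2} := by
      intro x hx
      simp only [Set.mem_setOf_eq] at hx ⊢
      exact hmix x v hx
    exact (Set.ncard_le_ncard hsub (Set.toFinite _)).trans (hCNT _ _)
  -- emptiness of the mixed set at v = a^(p^k+1)
  have hB3 : {x : F | x ≠ 0 ∧ x ≠ -a ∧
      (x + a) ^ (p ^ k + 1) + x ^ (p ^ k + 1) = a ^ (p ^ k + 1)} = ∅ := by
    ext x
    simp only [Set.mem_setOf_eq, Set.mem_empty_iff_false, iff_false, not_and]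
    intro hx0 hxa hxe
    have hxx : (x + a2) ^ (p ^ k + 1) = a2 ^ (p ^ k + 1) := by
      have h1 := hmix x _ hxe
      rw [h1, eq_comm, eq_div_iff h2F]
      linear_combination hae + (a - 3*a2) * hPa2 + (2*a2 ^ p ^ k - 2*a ^ p ^ k) * ha2eq + 2 * hae2
    have hr : ((x + a2) * a2⁻¹) ^ (p ^ k + 1) = 1 := by
      rw [mul_pow, inv_pow, hxx]
      exact mul_inv_cancel₀ (pow_ne_zero _ ha2ne)
    rcases RU _ hr with h1 | h1
    · apply hx0
      have h2 := (mul_inv_eq_one₀ ha2ne).1 h1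
      linear_combination h2
    · apply hxa
      have h2 : x + a2 = -1 * a2 := (mul_inv_eq_iff_eq_mul₀ ha2ne).1 h1
      linear_combination h2 + ha2eq
  -- rewriting the equation by quadratic characters
  have hd' : d = t + (p ^ k + 1) := by omega
  have hpowd : ∀ z : F, z ^ d = z ^ t * z ^ (p ^ k + 1) := fun z => by rw [hd', pow_add]
  have hsplit : ∀ x : F, (x + a) ^ d - x ^ d = b → x ≠ 0 → x ≠ -a →
      ((x + a) ^ (p ^ k + 1) - x ^ (p ^ k + 1) = b) ∨
      ((x + a) ^ (p ^ k + 1) - x ^ (p ^ k + 1) = -b) ∨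
      ((x + a) ^ (p ^ k + 1) + x ^ (p ^ k + 1) = b) ∨
      ((x + a) ^ (p ^ k + 1) + x ^ (p ^ k + 1) = -b) := by
    intro x hx hx0 hxa
    have hxa' : x + a ≠ 0 := fun h => hxa (by linear_combination h)
    rw [hpowd (x + a), hpowd x] at hx
    rcases hsign (x + a) hxa' with hτ | hτ <;> rcases hsign x hx0 with hσ | hσ <;>
      rw [hτ, hσ] at hx
    · exact Or.inl (by linear_combination hx)
    · exact Or.inr (Or.inr (Or.inl (by linear_combination hx)))
    · exact Or.inr (Or.inr (Or.inr (by linear_combination -hx)))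
    · exact Or.inr (Or.inl (by linear_combination -hx))
  -- membership of 0 and -a in the solution set
  have h0mem : (0 : F) ∈ {x : F | (x + a) ^ d - x ^ d = b} → a ^ d = b := by
    intro h
    simp only [Set.mem_setOf_eq, zero_add, zero_pow hdne, sub_zero] at h
    exact h
  have hamem : (-a : F) ∈ {x : F | (x + a) ^ d - x ^ d = b} → a ^ d = b := by
    intro h
    simp only [Set.mem_setOf_eq] at h
    rw [show -a + a = (0 : F) from by ring, zero_pow hdne, hdodd.neg_pow] at h
    linear_combination h
  have hadval : a ^ d = a ^ t * a ^ (p ^ k + 1) := hpowd a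
  have hpair : ({0, -a} : Set F).ncard ≤ 2 :=
    le_trans (Set.ncard_insert_le _ _) (by simp)
  -- main case analysis
  rcases eq_or_ne b (a ^ (p ^ k + 1)) with hb1 | hb1
  · -- b = a^e : patterns (1,1) and (1,-1) are impossible
    have hsubS : {x : F | (x + a) ^ d - x ^ d = b} ⊆ ({0, -a} : Set F) ∪
        ({x : F | x ≠ 0 ∧ (x + a) ^ (p ^ k + 1) - x ^ (p ^ k + 1) = -b} ∪
         {x : F | (x + a) ^ (p ^ k + 1) + x ^ (p ^ k + 1) = -b}) := by
      intro x hx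
      simp only [Set.mem_setOf_eq] at hx
      by_cases hx0 : x = 0
      · left; simp [hx0]
      by_cases hxa : x = -a
      · left; simp [hxa]
      rcases hsplit x hx hx0 hxa with h | h | h | h
      · exfalso
        have hmem : x ∈ {x : F | x ≠ 0 ∧
            (x + a) ^ (p ^ k + 1) - x ^ (p ^ k + 1) = a ^ (p ^ k + 1)} :=
          ⟨hx0, by rw [← hb1]; exact h⟩
        rw [hB0] at hmem
        exact hmem
      · right; left; exact ⟨hx0, h⟩
      · exfalso
        have hmem : x ∈ {x : F | x ≠ 0 ∧ x ≠ -a ∧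
            (x + a) ^ (p ^ k + 1) + x ^ (p ^ k + 1) = a ^ (p ^ k + 1)} :=
          ⟨hx0, hxa, by rw [← hb1]; exact h⟩
        rw [hB3] at hmem
        exact hmem
      · right; right; exact h
    refine le_trans (Set.ncard_le_ncard hsubS (Set.toFinite _)) ?_
    refine le_trans (Set.ncard_union_le _ _) ?_
    have h2' := le_trans (Set.ncard_union_le _ _) (add_le_add (hB1 (-b)) (hB2 (-b)))
    omega
  rcases eq_or_ne b (-(a ^ (p ^ k + 1))) with hb2 | hb2
  · -- b = -a^e : patterns (-1,-1) and (-1,1) are impossible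
    have hsubS : {x : F | (x + a) ^ d - x ^ d = b} ⊆ ({0, -a} : Set F) ∪
        ({x : F | x ≠ 0 ∧ (x + a) ^ (p ^ k + 1) - x ^ (p ^ k + 1) = b} ∪
         {x : F | (x + a) ^ (p ^ k + 1) + x ^ (p ^ k + 1) = b}) := by
      intro x hx
      simp only [Set.mem_setOf_eq] at hx
      by_cases hx0 : x = 0
      · left; simp [hx0]
      by_cases hxa : x = -a
      · left; simp [hxa]
      rcases hsplit x hx hx0 hxa with h | h | h | h
      · right; left; exact ⟨hx0, h⟩
      · exfalso
        have hmem : x ∈ {x : F | x ≠ 0 ∧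
            (x + a) ^ (p ^ k + 1) - x ^ (p ^ k + 1) = a ^ (p ^ k + 1)} :=
          ⟨hx0, by rw [h, hb2]; ring⟩
        rw [hB0] at hmem
        exact hmem
      · right; right; exact h
      · exfalso
        have hmem : x ∈ {x : F | x ≠ 0 ∧ x ≠ -a ∧
            (x + a) ^ (p ^ k + 1) + x ^ (p ^ k + 1) = a ^ (p ^ k + 1)} :=
          ⟨hx0, hxa, by rw [h, hb2]; ring⟩
        rw [hB3] at hmem
        exact hmem
    refine le_trans (Set.ncard_le_ncard hsubS (Set.toFinite _)) ?_
    refine le_trans (Set.ncard_union_le _ _) ?_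
    have h2' := le_trans (Set.ncard_union_le _ _) (add_le_add (hB1 b) (hB2 b))
    omega
  · -- b ≠ ±a^e : 0 and -a are not solutions
    have hnot : a ^ d ≠ b := by
      intro h
      rcases hsign a ha with hσ | hσ
      · exact hb1 (by rw [← h, hadval, hσ, one_mul])
      · exact hb2 (by rw [← h, hadval, hσ]; ring)
    have hsubS : {x : F | (x + a) ^ d - x ^ d = b} ⊆
        ({x : F | x ≠ 0 ∧ (x + a) ^ (p ^ k + 1) - x ^ (p ^ k + 1) = b} ∪
         {x : F | x ≠ 0 ∧ (x + a) ^ (p ^ k + 1) - x ^ (p ^ k + 1) = -b}) ∪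
        ({x : F | (x + a) ^ (p ^ k + 1) + x ^ (p ^ k + 1) = b} ∪
         {x : F | (x + a) ^ (p ^ k + 1) + x ^ (p ^ k + 1) = -b}) := by
      intro x hx
      have hx0 : x ≠ 0 := by
        intro h
        exact hnot (h0mem (by rw [← h]; exact hx))
      have hxa : x ≠ -a := by
        intro h
        exact hnot (hamem (by rw [← h]; exact hx))
      simp only [Set.mem_setOf_eq] at hx
      rcases hsplit x hx hx0 hxa with h | h | h | h
      · exact Or.inl (Or.inl ⟨hx0, h⟩)
      · exact Or.inl (Or.inr ⟨hx0, h⟩)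
      · exact Or.inr (Or.inl h)
      · exact Or.inr (Or.inr h)
    refine le_trans (Set.ncard_le_ncard hsubS (Set.toFinite _)) ?_
    refine le_trans (Set.ncard_union_le _ _) ?_
    have hL := le_trans (Set.ncard_union_le _ _) (add_le_add (hB1 b) (hB1 (-b)))
    have hR := le_trans (Set.ncard_union_le _ _) (add_le_add (hB2 b) (hB2 (-b)))
    omega
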